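/- Let X and Y be complex Banach spaces, let p > 1 with 1/p + 1/q = 1, and let (R(t))_{t>0} be a strongly continuous family of bounded linear operators from X to Y satisfying ‖R(t)‖_{L(X,Y)} ≤ M t^{β−1}/(1+t^γ) for all t > 0, where γ > 1, β ∈ (0,1], M > 0, and q(β−1) > −1. Fix ζ with 1/p < ζ < 1/p + γ − β, let g : ℝ → X be Stepanov p-bounded, and set G(t) := ∫_{−∞}^t R(t−s) g(s) ds for t ∈ ℝ. Then for every τ ∈ ℝ and every l > 0, sup_{x∈ℝ} ((1/l) ∫_x^{x+l} ‖G(t+τ) − G(t)‖_Y^p dt)^{1/p} ≤ M · ‖s ↦ s^{β−1}(1+s^ζ)/(1+s^γ)‖_{L^q((0,∞))} · (∫_0^∞ (1+s^ζ)^{−p} ds)^{1/p} · sup_{x∈ℝ} ((1/l) ∫_x^{x+l} ‖g(t+τ) − g(t)‖^p dt)^{1/p}. -/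

import Mathlib

open MeasureTheory Filter Set
open scoped ENNReal NNReal Topology

noncomputable section

/-- Local `p`-integrability of `f` on the set `I`. -/
def LocLpOn {X : Type*} [NormedAddCommGroup X] (p : ℝ) (I : Set ℝ) (f : ℝ → X) : Prop :=
  AEStronglyMeasurable f (volume.restrict I) ∧
    MeasureTheory.LocallyIntegrableOn (fun t => ‖f t‖ ^ p) I volume

/-- The Stepanov `p`-norm of `f` over the set `I`, as an extended nonnegative real. -/
def SpNorm {X : Type*} [NormedAddCommGroup X] (p : ℝ) (I : Set ℝ) (f : ℝ → X) : ℝ≥0∞ :=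
  ⨆ t ∈ I, ENNReal.ofReal ((∫ s in t..t + 1, ‖f s‖ ^ p) ^ (1 / p))

/-- The Stepanov distance `D_{S_l}^p[f,g]` over the set `I`, as an extended
nonnegative real. -/
def DS {X : Type*} [NormedAddCommGroup X] (p l : ℝ) (I : Set ℝ) (f g : ℝ → X) : ℝ≥0∞ :=
  ⨆ x ∈ I, ENNReal.ofReal (((1 / l) * ∫ t in x..x + l, ‖f t - g t‖ ^ p) ^ (1 / p))

/-- `f` is equi-Weyl-`p`-almost periodic on `I`. -/
def EquiWeylAP {X : Type*} [NormedAddCommGroup X] (p : ℝ) (I : Set ℝ) (f : ℝ → X) : Prop :=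
  ∀ ε : ℝ, 0 < ε → ∃ l : ℝ, 0 < l ∧ ∃ L : ℝ, 0 < L ∧
    ∀ a : ℝ, Set.Icc a (a + L) ⊆ I →
      ∃ τ ∈ Set.Icc a (a + L), DS p l I (fun t => f (t + τ)) f ≤ ENNReal.ofReal ε

/-- `f` is Weyl-`p`-almost periodic on `I`. -/
def WeylAP {X : Type*} [NormedAddCommGroup X] (p : ℝ) (I : Set ℝ) (f : ℝ → X) : Prop :=
  ∀ ε : ℝ, 0 < ε → ∃ L : ℝ, 0 < L ∧
    ∀ a : ℝ, Set.Icc a (a + L) ⊆ I →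
      ∃ τ ∈ Set.Icc a (a + L),
        Filter.limsup (fun l => DS p l I (fun t => f (t + τ)) f) Filter.atTop ≤
          ENNReal.ofReal ε

/-- `f` is Stepanov `p`-almost periodic on `I`. -/
def StepanovAP {X : Type*} [NormedAddCommGroup X] (p : ℝ) (I : Set ℝ) (f : ℝ → X) : Prop :=
  ∀ ε : ℝ, 0 < ε → ∃ L : ℝ, 0 < L ∧
    ∀ a : ℝ, Set.Icc a (a + L) ⊆ I →
      ∃ τ ∈ Set.Icc a (a + L),
        ∀ t ∈ I, (∫ s in t..t + 1, ‖f (s + τ) - f s‖ ^ p) ^ (1 / p) ≤ ε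

/-- `v` belongs to `C_0([0,∞) : Y)`: continuous on `[0,∞)` and vanishing at `+∞`. -/
def CZero {Y : Type*} [NormedAddCommGroup Y] (v : ℝ → Y) : Prop :=
  ContinuousOn v (Set.Ici (0 : ℝ)) ∧
    Filter.Tendsto (fun t => ‖v t‖) Filter.atTop (nhds 0)

/-- `f` is Stepanov `p`-vanishing (as a function on `[0,∞)`). -/
def SpVanishing {Y : Type*} [NormedAddCommGroup Y] (p : ℝ) (f : ℝ → Y) : Prop :=
  SpNorm p (Set.Ici 0) f < ⊤ ∧
    Filter.Tendsto (fun t => ∫ s in t..t + 1, ‖f s‖ ^ p) Filter.atTop (nhds 0)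

/-- `f` is equi-Weyl-`p`-vanishing (as a function on `[0,∞)`):
`lim_{l→∞} limsup_{t→∞} sup_{x≥0} ((1/l)∫_x^{x+l} ‖f(t+s)‖^p ds)^{1/p} = 0`. -/
def EquiWeylVanishing {Y : Type*} [NormedAddCommGroup Y] (p : ℝ) (f : ℝ → Y) : Prop :=
  Filter.Tendsto (fun l : ℝ =>
      Filter.limsup (fun t : ℝ =>
          ⨆ x ∈ Set.Ici (0 : ℝ),
            ENNReal.ofReal (((1 / l) * ∫ s in x..x + l, ‖f (t + s)‖ ^ p) ^ (1 / p)))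
        Filter.atTop)
    Filter.atTop (nhds 0)

/-- `f` is Weyl-`p`-vanishing (as a function on `[0,∞)`):
`lim_{t→∞} limsup_{l→∞} sup_{x≥0} ((1/l)∫_x^{x+l} ‖f(t+s)‖^p ds)^{1/p} = 0`. -/
def WeylVanishing {Y : Type*} [NormedAddCommGroup Y] (p : ℝ) (f : ℝ → Y) : Prop :=
  Filter.Tendsto (fun t : ℝ =>
      Filter.limsup (fun l : ℝ =>
          ⨆ x ∈ Set.Ici (0 : ℝ),
            ENNReal.ofReal (((1 / l) * ∫ s in x..x + l, ‖f (t + s)‖ ^ p) ^ (1 / p)))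
        Filter.atTop)
    Filter.atTop (nhds 0)

private lemma aux_iUnion : Ioi (0:ℝ) ⊆ ⋃ n : ℕ, Ioc (n:ℝ) (n+1) := by
  intro x hx
  have hx0 : (0:ℝ) < x := hx
  have h1 : 1 ≤ ⌈x⌉₊ := Nat.one_le_iff_ne_zero.mpr (by
    simp only [ne_eq, Nat.ceil_eq_zero, not_le]; exact hx0)
  refine mem_iUnion.mpr ⟨⌈x⌉₊ - 1, ?_⟩
  have hc : ((⌈x⌉₊ - 1 : ℕ) : ℝ) = (⌈x⌉₊ : ℝ) - 1 := by
    push_cast [Nat.cast_sub h1]; ring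
  constructor
  · rw [hc]
    have := Nat.ceil_lt_add_one hx0.le
    linarith
  · rw [hc]
    have := Nat.le_ceil x
    linarith

private lemma aux_summable {p ζ : ℝ} (hp : 0 < p) (hζ : 0 < ζ) (hpζ : 1 < ζ * p) :
    Summable (fun n : ℕ => (1/(1+(n:ℝ)^ζ))^p) := by
  rw [← summable_nat_add_iff 1]
  have h1 : Summable (fun n : ℕ => (n:ℝ) ^ (-(ζ*p))) :=
    Real.summable_nat_rpow.mpr (by linarith)
  have h2 : Summable (fun n : ℕ => ((n+1 : ℕ):ℝ) ^ (-(ζ*p))) :=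
    (summable_nat_add_iff 1).mpr h1
  refine Summable.of_nonneg_of_le (fun n => ?_) (fun n => ?_) h2
  · apply Real.rpow_nonneg
    positivity
  · set m : ℝ := ((n+1 : ℕ):ℝ) with hm
    have hm1 : (1:ℝ) ≤ m := by simp [hm]
    have hm0 : (0:ℝ) < m := lt_of_lt_of_le one_pos hm1
    have ha0 : (0:ℝ) < m ^ ζ := Real.rpow_pos_of_pos hm0 ζ
    have key : 1/(1+m^ζ) ≤ m ^ (-ζ) := by
      rw [Real.rpow_neg hm0.le, ← one_div]
      exact one_div_le_one_div_of_le ha0 (by linarith)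
    calc (1/(1+m^ζ))^p ≤ (m ^ (-ζ))^p :=
          Real.rpow_le_rpow (by positivity) key hp.le
      _ = m ^ (-(ζ*p)) := by
          rw [← Real.rpow_mul hm0.le]; ring_nf

private lemma aux_w_le {ζ : ℝ} (hζ : 0 < ζ) {a r : ℝ} (ha : 0 ≤ a) (har : a ≤ r) :
    1/(1+r^ζ) ≤ 1/(1+a^ζ) := by
  have h1 : (0:ℝ) < 1 + a^ζ := by positivity
  exact one_div_le_one_div_of_le h1 (by
    have := Real.rpow_le_rpow ha har hζ.le
    linarith)

private lemma aux_w_int {p ζ : ℝ} (hp : 0 < p) (hζ : 0 < ζ) (hpζ : 1 < ζ * p) :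
    IntegrableOn (fun s : ℝ => (1/(1+s^ζ))^p) (Ioi 0) volume := by
  have hmeas : AEStronglyMeasurable (fun s : ℝ => (1/(1+s^ζ))^p) (volume.restrict (Ioi 0)) := by
    have : Measurable (fun s : ℝ => (1/(1+s^ζ))^p) := by fun_prop
    exact this.aestronglyMeasurable
  have h01 : IntegrableOn (fun s : ℝ => (1/(1+s^ζ))^p) (Ioc 0 1) volume := by
    refine Integrable.mono' (integrable_const 1) (hmeas.mono_set Ioc_subset_Ioi_self) ?_
    filter_upwards [self_mem_ae_restrict measurableSet_Ioc] with s hs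
    have hs0 : (0:ℝ) < s := hs.1
    have h1 : (0:ℝ) < 1 + s^ζ := by positivity
    rw [Real.norm_eq_abs, abs_of_nonneg (by positivity)]
    apply Real.rpow_le_one (by positivity) ?_ hp.le
    rw [div_le_one h1]
    have : (0:ℝ) ≤ s ^ ζ := Real.rpow_nonneg hs0.le ζ
    linarith
  have h1i : IntegrableOn (fun s : ℝ => (1/(1+s^ζ))^p) (Ioi 1) volume := by
    refine Integrable.mono' (integrableOn_Ioi_rpow_of_lt (a := -(ζ*p)) (by linarith) one_pos)
      (hmeas.mono_set (Ioi_subset_Ioi zero_le_one)) ?_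
    filter_upwards [self_mem_ae_restrict measurableSet_Ioi] with s hs
    have hs1 : (1:ℝ) < s := hs
    have hs0 : (0:ℝ) < s := lt_trans one_pos hs1
    have ha0 : (0:ℝ) < s ^ ζ := Real.rpow_pos_of_pos hs0 ζ
    rw [Real.norm_eq_abs, abs_of_nonneg (by positivity)]
    have key : 1/(1+s^ζ) ≤ s ^ (-ζ) := by
      rw [Real.rpow_neg hs0.le, ← one_div]
      exact one_div_le_one_div_of_le ha0 (by linarith)
    calc (1/(1+s^ζ))^p ≤ (s ^ (-ζ))^p := Real.rpow_le_rpow (by positivity) key hp.le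
      _ = s ^ (-(ζ*p)) := by rw [← Real.rpow_mul hs0.le]; ring_nf
  have := h01.union h1i
  rwa [Ioc_union_Ioi_eq_Ioi zero_le_one] at this

private lemma aux_k_int {q β γ ζ : ℝ} (hq : 0 < q) (hζ : 0 < ζ) (hγ : 0 < γ)
    (h0 : -1 < q*(β-1)) (hinf : q*(β-1+ζ-γ) < -1) :
    IntegrableOn (fun s : ℝ => (s^(β-1)*(1+s^ζ)/(1+s^γ))^q) (Ioi 0) volume := by
  have hmeas : AEStronglyMeasurable (fun s : ℝ => (s^(β-1)*(1+s^ζ)/(1+s^γ))^q)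
      (volume.restrict (Ioi 0)) := by
    have : Measurable (fun s : ℝ => (s^(β-1)*(1+s^ζ)/(1+s^γ))^q) := by fun_prop
    exact this.aestronglyMeasurable
  have h01 : IntegrableOn (fun s : ℝ => (s^(β-1)*(1+s^ζ)/(1+s^γ))^q) (Ioc 0 1) volume := by
    have hdom : IntegrableOn (fun s : ℝ => 2^q * s ^ ((β-1)*q)) (Ioc 0 1) volume := by
      have := (intervalIntegral.intervalIntegrable_rpow' (a := 0) (b := 1)
        (r := (β-1)*q) (by nlinarith)).const_mul (2^q : ℝ)
      rwa [intervalIntegrable_iff_integrableOn_Ioc_of_le zero_le_one] at this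
    refine Integrable.mono' hdom (hmeas.mono_set Ioc_subset_Ioi_self) ?_
    filter_upwards [self_mem_ae_restrict measurableSet_Ioc] with s hs
    have hs0 : (0:ℝ) < s := hs.1
    have hs1 : s ≤ 1 := hs.2
    have hb0 : (0:ℝ) ≤ s ^ (β-1) := Real.rpow_nonneg hs0.le _
    have hz1 : s ^ ζ ≤ 1 := Real.rpow_le_one hs0.le hs1 hζ.le
    have hz0 : (0:ℝ) ≤ s ^ ζ := Real.rpow_nonneg hs0.le _
    have hg0 : (0:ℝ) ≤ s ^ γ := Real.rpow_nonneg hs0.le _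
    have hnum : (0:ℝ) ≤ s^(β-1)*(1+s^ζ) := by positivity
    have hkle : s^(β-1)*(1+s^ζ)/(1+s^γ) ≤ s^(β-1) * 2 := by
      calc s^(β-1)*(1+s^ζ)/(1+s^γ) ≤ s^(β-1)*(1+s^ζ)/1 :=
            div_le_div_of_nonneg_left hnum one_pos (by linarith) |>.trans_eq rfl
        _ = s^(β-1)*(1+s^ζ) := by ring
        _ ≤ s^(β-1) * 2 := by nlinarith
    rw [Real.norm_eq_abs, abs_of_nonneg (Real.rpow_nonneg (by positivity) q)]
    calc (s^(β-1)*(1+s^ζ)/(1+s^γ))^q ≤ (s^(β-1) * 2)^q :=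
          Real.rpow_le_rpow (by positivity) hkle hq.le
      _ = 2^q * s ^ ((β-1)*q) := by
          rw [Real.mul_rpow hb0 (by norm_num), ← Real.rpow_mul hs0.le]; ring
  have h1i : IntegrableOn (fun s : ℝ => (s^(β-1)*(1+s^ζ)/(1+s^γ))^q) (Ioi 1) volume := by
    have hdom : IntegrableOn (fun s : ℝ => 2^q * s ^ ((β-1+ζ-γ)*q)) (Ioi 1) volume :=
      (integrableOn_Ioi_rpow_of_lt (by nlinarith) one_pos).const_mul _
    refine Integrable.mono' hdom (hmeas.mono_set (Ioi_subset_Ioi zero_le_one)) ?_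
    filter_upwards [self_mem_ae_restrict measurableSet_Ioi] with s hs
    have hs1 : (1:ℝ) < s := hs
    have hs0 : (0:ℝ) < s := lt_trans one_pos hs1
    have hb0 : (0:ℝ) ≤ s ^ (β-1) := Real.rpow_nonneg hs0.le _
    have hz1 : (1:ℝ) ≤ s ^ ζ := Real.one_le_rpow hs1.le hζ.le
    have hg1 : (1:ℝ) ≤ s ^ γ := Real.one_le_rpow hs1.le hγ.le
    have hgpos : (0:ℝ) < s ^ γ := lt_of_lt_of_le one_pos hg1
    have hkle : s^(β-1)*(1+s^ζ)/(1+s^γ) ≤ 2 * s^(β-1+ζ-γ) := by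
      have h1 : s^(β-1)*(1+s^ζ) ≤ s^(β-1)*(2*s^ζ) := by nlinarith
      have h2 : s^(β-1)*(1+s^ζ)/(1+s^γ) ≤ s^(β-1)*(2*s^ζ)/(s^γ) :=
        div_le_div₀ (by positivity) h1 hgpos (by linarith)
      calc s^(β-1)*(1+s^ζ)/(1+s^γ) ≤ s^(β-1)*(2*s^ζ)/(s^γ) := h2
        _ = 2 * s^(β-1+ζ-γ) := by
            rw [show β-1+ζ-γ = (β-1)+ζ+(-γ) by ring, Real.rpow_add hs0,
              Real.rpow_add hs0, Real.rpow_neg hs0.le]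
            field_simp
    rw [Real.norm_eq_abs, abs_of_nonneg (Real.rpow_nonneg (by positivity) q)]
    calc (s^(β-1)*(1+s^ζ)/(1+s^γ))^q ≤ (2 * s^(β-1+ζ-γ))^q :=
          Real.rpow_le_rpow (by positivity) hkle hq.le
      _ = 2^q * s ^ ((β-1+ζ-γ)*q) := by
          rw [Real.mul_rpow (by norm_num) (Real.rpow_nonneg hs0.le _),
            ← Real.rpow_mul hs0.le]
  have := h01.union h1i
  rwa [Ioc_union_Ioi_eq_Ioi zero_le_one] at this

private lemma aux_unit {p ζ : ℝ} (hp : 0 < p) (hζ : 0 < ζ)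
    (u : ℝ → ℝ≥0∞) {C : ℝ≥0∞}
    (hC : ∀ y : ℝ, ∫⁻ s in Ioc y (y + 1), u s ≤ C) (t : ℝ) :
    ∫⁻ r in Ioi (0:ℝ), ENNReal.ofReal (1/(1+r^ζ)) ^ p * u (t - r) ≤
      (∑' n : ℕ, ENNReal.ofReal ((1/(1+(n:ℝ)^ζ))^p)) * C := by
  have step : ∀ n : ℕ, ∫⁻ r in Ioc (n:ℝ) (n+1), ENNReal.ofReal (1/(1+r^ζ)) ^ p * u (t - r) ≤
      ENNReal.ofReal ((1/(1+(n:ℝ)^ζ))^p) * C := by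
    intro n
    have htrans : ∫⁻ r in Ioc (n:ℝ) (n+1), u (t - r) ≤ C := by
      have hpre : (fun r : ℝ => t - r)⁻¹' (Ico (t-((n:ℝ)+1)) (t-n)) = Ioc (n:ℝ) (n+1) := by
        ext r
        simp only [mem_preimage, mem_Ico, mem_Ioc]
        constructor <;> intro h <;> exact ⟨by linarith [h.1, h.2], by linarith [h.1, h.2]⟩
      have hcv : ∫⁻ r in Ioc (n:ℝ) (n+1), u (t - r) =
          ∫⁻ s in Ico (t-((n:ℝ)+1)) (t-n), u s := by
        rw [← hpre]
        exact (Measure.measurePreserving_sub_left volume t).setLIntegral_comp_preimage_emb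
          (MeasurableEquiv.subLeft t).measurableEmbedding u _
      rw [hcv, Measure.restrict_congr_set Ico_ae_eq_Ioc]
      have := hC (t-((n:ℝ)+1))
      rwa [show t-((n:ℝ)+1) + 1 = t - n by ring] at this
    calc ∫⁻ r in Ioc (n:ℝ) (n+1), ENNReal.ofReal (1/(1+r^ζ)) ^ p * u (t - r)
        ≤ ∫⁻ r in Ioc (n:ℝ) (n+1), ENNReal.ofReal ((1/(1+(n:ℝ)^ζ))^p) * u (t - r) := by
          refine setLIntegral_mono' measurableSet_Ioc (fun r hr => ?_)
          refine mul_le_mul_left ?_ _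
          have hr0 : (0:ℝ) < r := lt_of_le_of_lt (Nat.cast_nonneg n) hr.1
          rw [ENNReal.ofReal_rpow_of_nonneg (by positivity) hp.le]
          exact ENNReal.ofReal_le_ofReal
            (Real.rpow_le_rpow (by positivity) (aux_w_le hζ (Nat.cast_nonneg n) hr.1.le) hp.le)
      _ = ENNReal.ofReal ((1/(1+(n:ℝ)^ζ))^p) * ∫⁻ r in Ioc (n:ℝ) (n+1), u (t - r) :=
          lintegral_const_mul' _ _ ENNReal.ofReal_ne_top
      _ ≤ ENNReal.ofReal ((1/(1+(n:ℝ)^ζ))^p) * C := mul_le_mul_right htrans _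
  calc ∫⁻ r in Ioi (0:ℝ), ENNReal.ofReal (1/(1+r^ζ)) ^ p * u (t - r)
      ≤ ∫⁻ r in ⋃ n : ℕ, Ioc (n:ℝ) (n+1), ENNReal.ofReal (1/(1+r^ζ)) ^ p * u (t - r) :=
        lintegral_mono_set aux_iUnion
    _ ≤ ∑' n : ℕ, ∫⁻ r in Ioc (n:ℝ) (n+1), ENNReal.ofReal (1/(1+r^ζ)) ^ p * u (t - r) :=
        lintegral_iUnion_le _ _
    _ ≤ ∑' n : ℕ, ENNReal.ofReal ((1/(1+(n:ℝ)^ζ))^p) * C := ENNReal.tsum_le_tsum step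
    _ = (∑' n : ℕ, ENNReal.ofReal ((1/(1+(n:ℝ)^ζ))^p)) * C := ENNReal.tsum_mul_right

private lemma aux_conv_meas {X Y : Type*} [NormedAddCommGroup X] [NormedSpace ℂ X]
    [NormedAddCommGroup Y] [NormedSpace ℂ Y]
    (R : ℝ → X →L[ℂ] Y) (hRsc : ∀ x : X, ContinuousOn (fun t => R t x) (Set.Ioi (0:ℝ)))
    (t : ℝ) {f : ℝ → X} (hf : AEStronglyMeasurable f volume) :
    AEStronglyMeasurable (fun s => R (t - s) (f s)) (volume.restrict (Iic t)) := by
  rw [← Measure.restrict_congr_set (Iio_ae_eq_Iic (a := t))]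
  obtain ⟨f', hf'm, hff'⟩ := hf
  have key : ∀ φ : SimpleFunc ℝ X,
      AEStronglyMeasurable (fun s => R (t - s) (φ s)) (volume.restrict (Iio t)) := by
    intro φ
    induction φ using SimpleFunc.induction with
    | @const c A hA =>
      have hcont : ContinuousOn (fun s : ℝ => R (t - s) c) (Iio t) := by
        refine (hRsc c).comp (Continuous.continuousOn (by continuity)) ?_
        intro s hs
        simp only [mem_Ioi]
        have : s < t := hs
        linarith
      have h1 : AEStronglyMeasurable (fun s : ℝ => R (t - s) c) (volume.restrict (Iio t)) :=
        hcont.aestronglyMeasurable measurableSet_Iio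
      refine (h1.indicator hA).congr (Eventually.of_forall fun s => ?_)
      by_cases hsA : s ∈ A <;>
        simp [SimpleFunc.piecewise_apply, Set.indicator, hsA]
    | @add φ ψ hdisj hφ hψ =>
      refine (hφ.add hψ).congr (Eventually.of_forall fun s => ?_)
      simp [map_add]
  have h2 : AEStronglyMeasurable (fun s => R (t - s) (f' s)) (volume.restrict (Iio t)) := by
    refine aestronglyMeasurable_of_tendsto_ae atTop (fun n => key (hf'm.approx n))
      (Eventually.of_forall fun s => ?_)
    exact ((R (t - s)).continuous.tendsto _).comp (hf'm.tendsto_approx s)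
  refine h2.congr ?_
  refine ae_restrict_of_ae (hff'.mono fun s hs => ?_)
  simp [hs]

private lemma aux_ofReal_le_rpow {A : ℝ≥0∞} {v p : ℝ} (hv : 0 ≤ v) (hp : 0 < p)
    (h : ENNReal.ofReal (v ^ (1/p)) ≤ A) : ENNReal.ofReal v ≤ A ^ p := by
  have h2 : ENNReal.ofReal (v ^ (1/p)) ^ p ≤ A ^ p := ENNReal.rpow_le_rpow h hp.le
  rwa [ENNReal.ofReal_rpow_of_nonneg (Real.rpow_nonneg hv _) hp.le,
    ← Real.rpow_mul hv, one_div_mul_cancel hp.ne', Real.rpow_one] at h2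

private lemma aux_interval_bound {p l : ℝ} (hp : 0 < p) (hl : 0 < l) {A : ℝ≥0∞} {v : ℝ}
    (hv : 0 ≤ v) (h : ENNReal.ofReal (((1/l) * v) ^ (1/p)) ≤ A) :
    ENNReal.ofReal v ≤ ENNReal.ofReal l * A ^ p := by
  have h1 : ENNReal.ofReal ((1/l)*v) ≤ A^p :=
    aux_ofReal_le_rpow (by positivity) hp h
  calc ENNReal.ofReal v = ENNReal.ofReal (l * ((1/l)*v)) := by
        rw [show l*((1/l)*v) = v by field_simp]
    _ = ENNReal.ofReal l * ENNReal.ofReal ((1/l)*v) := ENNReal.ofReal_mul hl.le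
    _ ≤ _ := mul_le_mul_right h1 _

private lemma aux_add_rpow {p : ℝ} (hp : 0 ≤ p) {a b : ℝ} (ha : 0 ≤ a) (hb : 0 ≤ b) :
    (a+b)^p ≤ 2^p * (a^p + b^p) := by
  have h1 : a + b ≤ 2 * max a b := by
    rcases le_total a b with h|h
    · rw [max_eq_right h]; linarith
    · rw [max_eq_left h]; linarith
  calc (a+b)^p ≤ (2 * max a b)^p := Real.rpow_le_rpow (by positivity) h1 hp
    _ = 2^p * (max a b)^p := Real.mul_rpow (by norm_num) (le_max_of_le_left ha)
    _ ≤ 2^p * (a^p + b^p) := by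
        refine mul_le_mul_of_nonneg_left ?_ (Real.rpow_nonneg (by norm_num) p)
        rcases le_total a b with h|h
        · rw [max_eq_right h]
          have := Real.rpow_nonneg ha p
          linarith
        · rw [max_eq_left h]
          have := Real.rpow_nonneg hb p
          linarith


/-- The key estimate in the proof of Theorem 2.1: the Stepanov distance of the
translates of `G` is controlled by that of the translates of `g`. -/
theorem convolution_translation_estimate {X Y : Type*}
    [NormedAddCommGroup X] [NormedSpace ℂ X] [CompleteSpace X]
    [NormedAddCommGroup Y] [NormedSpace ℂ Y] [CompleteSpace Y]
    (p q M β γ ζ : ℝ) (hp : 1 < p) (hpq : 1 / p + 1 / q = 1)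
    (hM : 0 < M) (hβ : β ∈ Set.Ioc (0 : ℝ) 1) (hγ : 1 < γ)
    (hqβ : q * (β - 1) > -1) (hζ1 : 1 / p < ζ) (hζ2 : ζ < 1 / p + γ - β)
    (R : ℝ → X →L[ℂ] Y)
    (hRsc : ∀ x : X, ContinuousOn (fun t => R t x) (Set.Ioi (0 : ℝ)))
    (hR : ∀ t : ℝ, 0 < t → ‖R t‖ ≤ M * t ^ (β - 1) / (1 + t ^ γ))
    (g : ℝ → X) (hgloc : LocLpOn p Set.univ g) (hgS : SpNorm p Set.univ g < ⊤)
    (G : ℝ → Y) (hG : ∀ t : ℝ, G t = ∫ s in Set.Iic t, R (t - s) (g s)) :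
    ∀ τ l : ℝ, 0 < l →
      DS p l Set.univ (fun t => G (t + τ)) G ≤
        ENNReal.ofReal
            (M * (∫ s in Set.Ioi (0 : ℝ), (s ^ (β - 1) * (1 + s ^ ζ) / (1 + s ^ γ)) ^ q) ^ (1 / q) *
              (∫ s in Set.Ioi (0 : ℝ), (1 / (1 + s ^ ζ)) ^ p) ^ (1 / p)) *
          DS p l Set.univ (fun t => g (t + τ)) g := by
  intro τ l hl
  -- numerology
  have hp0 : 0 < p := lt_trans one_pos hp
  have hp1 : (0:ℝ) < 1/p := by positivity
  have hp1' : 1/p < 1 := by rw [div_lt_one hp0]; exact hp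
  have hq1 : 1/q = 1 - 1/p := by linarith
  have hq0 : 0 < q := by
    rcases lt_trichotomy q 0 with h|h|h
    · exfalso
      have h2 : 1/q < 0 := one_div_neg.mpr h
      linarith
    · exfalso
      rw [h, div_zero] at hq1
      linarith
    · exact h
  have hq : 1 < q := by
    have h2 : 1/q < 1 := by rw [hq1]; linarith
    rw [div_lt_one hq0] at h2
    exact h2
  have hζ0 : 0 < ζ := lt_trans hp1 hζ1
  have hζp : 1 < ζ * p := by
    have := (div_lt_iff₀ hp0).mp hζ1
    linarith
  have hγ0 : 0 < γ := lt_trans one_pos hγ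
  have hconj : Real.HolderConjugate q p :=
    ⟨by rw [inv_eq_one_div, inv_eq_one_div, inv_one]; linarith, hq0, hp0⟩
  have hkinf : q*(β-1+ζ-γ) < -1 := by
    have h1 : β-1+ζ-γ < -(1/q) := by rw [hq1]; linarith
    have h2 : q * (β-1+ζ-γ) < q * (-(1/q)) := mul_lt_mul_of_pos_left h1 hq0
    have h3 : q * (-(1/q)) = -1 := by field_simp
    linarith
  -- the kernel functions
  set k : ℝ → ℝ := fun s => s^(β-1)*(1+s^ζ)/(1+s^γ) with hk
  set w : ℝ → ℝ := fun s => 1/(1+s^ζ) with hw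
  have hk0 : ∀ r : ℝ, 0 < r → 0 ≤ k r := by
    intro r hr
    have h1 : (0:ℝ) ≤ r^(β-1) := Real.rpow_nonneg hr.le _
    have h2 : (0:ℝ) ≤ r^ζ := Real.rpow_nonneg hr.le _
    have h3 : (0:ℝ) ≤ r^γ := Real.rpow_nonneg hr.le _
    rw [hk]
    exact div_nonneg (mul_nonneg h1 (by linarith)) (by linarith)
  have hw0 : ∀ r : ℝ, 0 < r → 0 ≤ w r := by
    intro r hr
    have h2 : (0:ℝ) ≤ r^ζ := Real.rpow_nonneg hr.le _
    rw [hw]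
    positivity
  have hkint : IntegrableOn (fun s => k s ^ q) (Ioi 0) volume :=
    aux_k_int hq0 hζ0 hγ0 hqβ hkinf
  have hwint : IntegrableOn (fun s => w s ^ p) (Ioi 0) volume :=
    aux_w_int hp0 hζ0 hζp
  -- measurable version of g
  have hgm : AEStronglyMeasurable g volume := by
    have := hgloc.1
    rwa [Measure.restrict_univ] at this
  obtain ⟨g', hg'sm, hgg'⟩ := hgm
  have hgm : AEStronglyMeasurable g volume := ⟨g', hg'sm, hgg'⟩
  have hshift : (fun s => g (s + τ)) =ᵐ[volume] (fun s => g' (s + τ)) := by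
    have := Measure.QuasiMeasurePreserving.ae_eq_comp
      (measurePreserving_add_right volume τ).quasiMeasurePreserving hgg'
    simpa [Function.comp_def] using this
  set Hg : ℝ → ℝ≥0∞ := fun s => (‖g' s‖₊ : ℝ≥0∞) with hHg
  set H : ℝ → ℝ≥0∞ := fun s => (‖g' (s + τ) - g' s‖₊ : ℝ≥0∞) with hH
  have hHgm : Measurable Hg := hg'sm.enorm
  have hHm : Measurable H :=
    ((hg'sm.comp_measurable (measurable_add_const τ)).sub hg'sm).enorm
  set Φ : ℝ → ℝ≥0∞ := fun r => ENNReal.ofReal (M * r^(β-1)/(1+r^γ)) with hΦ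
  set K : ℝ → ℝ≥0∞ := fun r => ENNReal.ofReal (k r) with hK
  set W : ℝ → ℝ≥0∞ := fun r => ENNReal.ofReal (w r) with hW
  have hKm : Measurable K := by
    rw [hK, hk]; fun_prop
  have hWm : Measurable W := by
    rw [hW, hw]; fun_prop
  have hΦfac : ∀ r ∈ Ioi (0:ℝ), Φ r = ENNReal.ofReal M * (K r * W r) := by
    intro r hr
    have hr0 : (0:ℝ) < r := hr
    have h2r : (0:ℝ) ≤ r^ζ := Real.rpow_nonneg hr0.le _
    have h1 : (0:ℝ) < 1 + r^ζ := by linarith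
    have h3r : (0:ℝ) ≤ r^γ := Real.rpow_nonneg hr0.le _
    have h2 : (0:ℝ) < 1 + r^γ := by linarith
    have hid : M * r^(β-1)/(1+r^γ) = M * (k r * w r) := by
      rw [hk, hw]
      dsimp only
      field_simp
    rw [hΦ]
    dsimp only
    rw [hid, ENNReal.ofReal_mul hM.le, ENNReal.ofReal_mul (hk0 r hr0)]
  -- per-unit-interval bound coming from the Stepanov norm of g
  set B : ℝ≥0∞ := SpNorm p univ g with hB
  have hBlt : B ≠ ⊤ := hgS.ne
  have hgp_int : ∀ a b : ℝ, IntegrableOn (fun s => ‖g s‖^p) (Ioc a b) volume := by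
    intro a b
    exact (hgloc.2.integrableOn_compact_subset (subset_univ _) isCompact_Icc).mono_set
      Ioc_subset_Icc_self
  have hunit : ∀ y : ℝ, ∫⁻ s in Ioc y (y+1), Hg s ^ p ≤ B ^ p := by
    intro y
    have hle : ENNReal.ofReal ((∫ s in y..y+1, ‖g s‖^p) ^ (1/p)) ≤ B := by
      rw [hB, SpNorm]
      exact le_biSup (fun t => ENNReal.ofReal ((∫ s in t..t + 1, ‖g s‖ ^ p) ^ (1 / p)))
        (mem_univ y)
    have hval : ∫ s in y..(y+1), ‖g s‖^p = ∫ s in Ioc y (y+1), ‖g s‖^p :=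
      intervalIntegral.integral_of_le (by linarith)
    have hint0 : 0 ≤ ∫ s in Ioc y (y+1), ‖g s‖^p :=
      setIntegral_nonneg measurableSet_Ioc fun s _ => Real.rpow_nonneg (norm_nonneg _) p
    have h2 : ENNReal.ofReal (∫ s in Ioc y (y+1), ‖g s‖^p) ≤ B ^ p :=
      aux_ofReal_le_rpow hint0 hp0 (by rwa [hval] at hle)
    calc ∫⁻ s in Ioc y (y+1), Hg s ^ p
        = ∫⁻ s in Ioc y (y+1), ENNReal.ofReal (‖g s‖^p) := by
          refine lintegral_congr_ae ?_
          filter_upwards [ae_restrict_of_ae hgg'] with s hs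
          rw [hHg]
          dsimp only
          rw [hs, ← enorm_eq_nnnorm, ← ofReal_norm,
            ENNReal.ofReal_rpow_of_nonneg (norm_nonneg _) hp0.le]
      _ = ENNReal.ofReal (∫ s in Ioc y (y+1), ‖g s‖^p) :=
          (ofReal_integral_eq_lintegral_ofReal (hgp_int y (y+1))
            (ae_restrict_of_ae (Eventually.of_forall fun s =>
              Real.rpow_nonneg (norm_nonneg _) p))).symm
      _ ≤ B ^ p := h2
  -- per-interval bound coming from the Stepanov distance of the translates of g
  set D : ℝ≥0∞ := DS p l univ (fun t => g (t + τ)) g with hD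
  have hΔint : ∀ y : ℝ, IntegrableOn (fun t => ‖g (t+τ) - g t‖^p) (Ioc y (y+l)) volume := by
    intro y
    have hg1 : IntegrableOn (fun t => ‖g (t+τ)‖^p) (Ioc y (y+l)) volume := by
      have base : IntegrableOn (fun s => ‖g s‖^p) (Ioc (y+τ) (y+l+τ)) volume := hgp_int _ _
      have h3 := ((measurePreserving_add_right volume τ).integrableOn_comp_preimage
        (MeasurableEquiv.addRight τ).measurableEmbedding).mpr base
      have hpre : ((fun x : ℝ => x + τ)⁻¹' Ioc (y+τ) (y+l+τ)) = Ioc y (y+l) := by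
        ext u
        simp only [mem_preimage, mem_Ioc]
        constructor <;> intro h <;> exact ⟨by linarith [h.1], by linarith [h.2]⟩
      rwa [hpre] at h3
    have hg2 : IntegrableOn (fun t => ‖g t‖^p) (Ioc y (y+l)) volume := hgp_int _ _
    have hdom : IntegrableOn (fun t => 2^p * (‖g (t+τ)‖^p + ‖g t‖^p)) (Ioc y (y+l)) volume :=
      (hg1.add hg2).const_mul _
    have hrpc : Continuous (fun x : ℝ => x ^ p) :=
      continuous_iff_continuousAt.mpr fun x => Real.continuousAt_rpow_const x p (Or.inr hp0.le)
    refine Integrable.mono' hdom ?_ ?_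
    · have h1 : AEStronglyMeasurable (fun t => g (t+τ)) volume :=
        hgm.comp_quasiMeasurePreserving
          (measurePreserving_add_right volume τ).quasiMeasurePreserving
      exact (hrpc.comp_aestronglyMeasurable ((h1.sub hgm).norm)).restrict
    · refine Eventually.of_forall fun t => ?_
      rw [Real.norm_eq_abs, abs_of_nonneg (Real.rpow_nonneg (norm_nonneg _) p)]
      calc ‖g (t+τ) - g t‖^p ≤ (‖g (t+τ)‖ + ‖g t‖)^p :=
            Real.rpow_le_rpow (norm_nonneg _) (norm_sub_le _ _) hp0.le
        _ ≤ 2^p * (‖g (t+τ)‖^p + ‖g t‖^p) :=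
            aux_add_rpow hp0.le (norm_nonneg _) (norm_nonneg _)
  have hDSb : ∀ y : ℝ, ∫⁻ t in Ioc y (y+l), H t ^ p ≤ ENNReal.ofReal l * D ^ p := by
    intro y
    have hle : ENNReal.ofReal (((1/l) * ∫ t in y..y+l, ‖g (t+τ) - g t‖^p) ^ (1/p)) ≤ D := by
      rw [hD, DS]
      exact le_biSup
        (fun x => ENNReal.ofReal ((1 / l * ∫ t in x..x + l, ‖g (t + τ) - g t‖ ^ p) ^ (1 / p)))
        (mem_univ y)
    have hval : ∫ t in y..(y+l), ‖g (t+τ) - g t‖^p = ∫ t in Ioc y (y+l), ‖g (t+τ) - g t‖^p :=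
      intervalIntegral.integral_of_le (by linarith)
    have hint0 : 0 ≤ ∫ t in Ioc y (y+l), ‖g (t+τ) - g t‖^p :=
      setIntegral_nonneg measurableSet_Ioc fun t _ => Real.rpow_nonneg (norm_nonneg _) p
    have h2 : ENNReal.ofReal (∫ t in Ioc y (y+l), ‖g (t+τ) - g t‖^p) ≤
        ENNReal.ofReal l * D ^ p :=
      aux_interval_bound hp0 hl hint0 (by rwa [hval] at hle)
    calc ∫⁻ t in Ioc y (y+l), H t ^ p
        = ∫⁻ t in Ioc y (y+l), ENNReal.ofReal (‖g (t+τ) - g t‖^p) := by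
          refine lintegral_congr_ae ?_
          filter_upwards [ae_restrict_of_ae hgg', ae_restrict_of_ae hshift] with t h1 h2'
          have h2'' : g (t+τ) = g' (t+τ) := h2'
          rw [hH]
          dsimp only
          rw [h2'', h1, ← enorm_eq_nnnorm, ← ofReal_norm,
            ENNReal.ofReal_rpow_of_nonneg (norm_nonneg _) hp0.le]
      _ = ENNReal.ofReal (∫ t in Ioc y (y+l), ‖g (t+τ) - g t‖^p) :=
          (ofReal_integral_eq_lintegral_ofReal (hΔint y)
            (ae_restrict_of_ae (Eventually.of_forall fun t =>
              Real.rpow_nonneg (norm_nonneg _) p))).symm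
      _ ≤ _ := h2
  -- pointwise operator bound
  have hRb : ∀ (r : ℝ), 0 < r → ∀ x : X, (‖R r x‖₊ : ℝ≥0∞) ≤ Φ r * (‖x‖₊ : ℝ≥0∞) := by
    intro r hr x
    have h3r : (0:ℝ) ≤ r^γ := Real.rpow_nonneg hr.le _
    have hb := Real.rpow_nonneg hr.le (β-1)
    have hφnn : (0:ℝ) ≤ M * r^(β-1)/(1+r^γ) :=
      div_nonneg (mul_nonneg hM.le hb) (by linarith)
    rw [← enorm_eq_nnnorm, ← enorm_eq_nnnorm, ← ofReal_norm, ← ofReal_norm, hΦ]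
    dsimp only
    rw [← ENNReal.ofReal_mul hφnn]
    exact ENNReal.ofReal_le_ofReal (le_trans ((R r).le_opNorm x)
      (mul_le_mul_of_nonneg_right (hR r hr) (norm_nonneg _)))
  -- change of variables s ↦ t - s
  have hrefl : ∀ (u : ℝ → ℝ≥0∞) (t : ℝ),
      ∫⁻ s in Iic t, Φ (t - s) * u s = ∫⁻ r in Ioi (0:ℝ), Φ r * u (t - r) := by
    intro u t
    have hpre : (fun s : ℝ => t - s)⁻¹' (Ici (0:ℝ)) = Iic t := by
      ext s
      simp [sub_nonneg]
    calc ∫⁻ s in Iic t, Φ (t - s) * u s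
        = ∫⁻ s in (fun s : ℝ => t - s)⁻¹' (Ici 0), Φ (t - s) * u (t - (t - s)) := by
          rw [hpre]
          refine setLIntegral_congr_fun measurableSet_Iic
            (fun s _ => ?_)
          rw [sub_sub_cancel]
      _ = ∫⁻ r in Ici (0:ℝ), Φ r * u (t - r) :=
          (Measure.measurePreserving_sub_left volume t).setLIntegral_comp_preimage_emb
            (MeasurableEquiv.subLeft t).measurableEmbedding (fun r => Φ r * u (t - r)) (Ici 0)
      _ = ∫⁻ r in Ioi (0:ℝ), Φ r * u (t - r) := by
          rw [← Measure.restrict_congr_set (Ioi_ae_eq_Ici (a := (0:ℝ)))]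
  -- Hölder
  have hHolder : ∀ (u : ℝ → ℝ≥0∞), Measurable u → ∀ t : ℝ,
      ∫⁻ r in Ioi (0:ℝ), Φ r * u (t - r) ≤
        ENNReal.ofReal M * ((∫⁻ r in Ioi (0:ℝ), K r ^ q) ^ (1/q) *
          (∫⁻ r in Ioi (0:ℝ), (W r * u (t - r)) ^ p) ^ (1/p)) := by
    intro u hu t
    have h1 : ∫⁻ r in Ioi (0:ℝ), Φ r * u (t - r) =
        ∫⁻ r in Ioi (0:ℝ), ENNReal.ofReal M * (K r * (W r * u (t - r))) := by
      refine setLIntegral_congr_fun measurableSet_Ioi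
        (fun r hr => ?_)
      rw [hΦfac r hr]
      ring
    rw [h1, lintegral_const_mul' _ _ ENNReal.ofReal_ne_top]
    refine mul_le_mul_right ?_ _
    have hum : Measurable fun r => W r * u (t - r) :=
      hWm.mul (hu.comp (measurable_const.sub measurable_id))
    have h2 := ENNReal.lintegral_mul_le_Lp_mul_Lq (volume.restrict (Ioi 0)) hconj
      hKm.aemeasurable hum.aemeasurable
    simpa [Pi.mul_apply] using h2
  -- identification of the constants
  have hKq_eq : (∫⁻ r in Ioi (0:ℝ), K r ^ q) = ENNReal.ofReal (∫ s in Ioi (0:ℝ), k s ^ q) := by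
    rw [ofReal_integral_eq_lintegral_ofReal hkint (by
      filter_upwards [self_mem_ae_restrict measurableSet_Ioi] with s hs
      exact Real.rpow_nonneg (hk0 s hs) q)]
    refine setLIntegral_congr_fun measurableSet_Ioi
      (fun r hr => ?_)
    rw [hK]
    dsimp only
    exact ENNReal.ofReal_rpow_of_nonneg (hk0 r hr) hq0.le
  have hWp_eq : (∫⁻ r in Ioi (0:ℝ), W r ^ p) = ENNReal.ofReal (∫ s in Ioi (0:ℝ), w s ^ p) := by
    rw [ofReal_integral_eq_lintegral_ofReal hwint (by
      filter_upwards [self_mem_ae_restrict measurableSet_Ioi] with s hs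
      exact Real.rpow_nonneg (hw0 s hs) p)]
    refine setLIntegral_congr_fun measurableSet_Ioi
      (fun r hr => ?_)
    rw [hW]
    dsimp only
    exact ENNReal.ofReal_rpow_of_nonneg (hw0 r hr) hp0.le
  set Kq : ℝ≥0∞ := (∫⁻ r in Ioi (0:ℝ), K r ^ q) ^ (1/q) with hKq
  have hKqt : Kq ≠ ⊤ := by
    rw [hKq, hKq_eq]
    exact (ENNReal.rpow_lt_top_of_nonneg (by positivity) ENNReal.ofReal_ne_top).ne
  -- finiteness of the sum
  set S : ℝ≥0∞ := ∑' n : ℕ, ENNReal.ofReal ((1/(1+(n:ℝ)^ζ))^p) with hS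
  have hSt : S ≠ ⊤ := by
    rw [hS, ← ENNReal.ofReal_tsum_of_nonneg (fun n => Real.rpow_nonneg (by positivity) p)
      (aux_summable hp0 hζ0 hζp)]
    exact ENNReal.ofReal_ne_top
  -- basic a.e. facts on Iic t
  have hae_lt : ∀ t : ℝ, ∀ᵐ (s : ℝ) ∂(volume.restrict (Iic t)), s ≠ t := by
    intro t
    refine ae_restrict_of_ae ?_
    rw [ae_iff]
    have : {a : ℝ | ¬ a ≠ t} = {t} := by
      ext a
      simp
    rw [this]
    exact measure_singleton t
  -- integrability of the convolution integrand
  have hIntb : ∀ t : ℝ, IntegrableOn (fun s => R (t - s) (g s)) (Iic t) volume := by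
    intro t
    refine ⟨aux_conv_meas R hRsc t hgm, ?_⟩
    show (∫⁻ s in Iic t, (‖R (t - s) (g s)‖₊ : ℝ≥0∞)) < ⊤
    have hWHg : (∫⁻ r in Ioi (0:ℝ), (W r * Hg (t - r)) ^ p) ≤ S * B ^ p := by
      have heq : ∀ r : ℝ, (W r * Hg (t - r)) ^ p = W r ^ p * Hg (t - r) ^ p := fun r =>
        ENNReal.mul_rpow_of_nonneg _ _ hp0.le
      calc ∫⁻ r in Ioi (0:ℝ), (W r * Hg (t - r)) ^ p
          = ∫⁻ r in Ioi (0:ℝ), ENNReal.ofReal (1/(1+r^ζ)) ^ p * ((fun s => Hg s ^ p) (t - r)) := by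
            refine lintegral_congr fun r => ?_
            rw [heq r]
        _ ≤ S * B ^ p := aux_unit hp0 hζ0 (fun s => Hg s ^ p) hunit t
    calc ∫⁻ s in Iic t, (‖R (t - s) (g s)‖₊ : ℝ≥0∞)
        ≤ ∫⁻ s in Iic t, Φ (t - s) * Hg s := by
          refine lintegral_mono_ae ?_
          filter_upwards [hae_lt t, self_mem_ae_restrict measurableSet_Iic,
            ae_restrict_of_ae hgg'] with s hne hst hgs
          have hlt : 0 < t - s := sub_pos.mpr (lt_of_le_of_ne hst hne)
          calc (‖R (t - s) (g s)‖₊ : ℝ≥0∞) ≤ Φ (t - s) * (‖g s‖₊ : ℝ≥0∞) := hRb _ hlt _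
            _ = Φ (t - s) * Hg s := by rw [hHg]; dsimp only; rw [hgs]
      _ = ∫⁻ r in Ioi (0:ℝ), Φ r * Hg (t - r) := hrefl Hg t
      _ ≤ ENNReal.ofReal M * (Kq * (∫⁻ r in Ioi (0:ℝ), (W r * Hg (t - r)) ^ p) ^ (1/p)) :=
          hHolder Hg hHgm t
      _ < ⊤ := by
          refine ENNReal.mul_lt_top ENNReal.ofReal_lt_top ?_
          refine ENNReal.mul_lt_top hKqt.lt_top ?_
          refine ENNReal.rpow_lt_top_of_nonneg (by positivity) ?_
          exact ((lt_of_le_of_lt hWHg (ENNReal.mul_lt_top hSt.lt_top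
            (ENNReal.rpow_lt_top_of_nonneg hp0.le hBlt))).ne)
  -- the key pointwise estimate for the difference of G
  have hdiff : ∀ t : ℝ, (‖G (t+τ) - G t‖₊ : ℝ≥0∞) ≤
      ENNReal.ofReal M * (Kq *
        (∫⁻ r in Ioi (0:ℝ), (W r * H (t - r)) ^ p) ^ (1/p)) := by
    intro t
    have hpre : ((fun x : ℝ => x + τ)⁻¹' (Iic (t+τ))) = Iic t := by
      ext u
      simp
    have hfe : (fun u : ℝ => R (t + τ - (u + τ)) (g (u + τ)))
        = fun u : ℝ => R (t - u) (g (u + τ)) := by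
      funext u
      rw [add_sub_add_right_eq_sub]
    have hshiftInt : IntegrableOn (fun u => R (t - u) (g (u + τ))) (Iic t) volume := by
      have h3 := ((measurePreserving_add_right volume τ).integrableOn_comp_preimage
        (MeasurableEquiv.addRight τ).measurableEmbedding).mpr (hIntb (t + τ))
      rw [hpre] at h3
      have : ((fun s => R (t + τ - s) (g s)) ∘ (fun x : ℝ => x + τ))
          = fun u : ℝ => R (t - u) (g (u + τ)) := by
        funext u
        simp only [Function.comp_apply]
        rw [add_sub_add_right_eq_sub]
      rwa [this] at h3
    have hGshift : G (t + τ) = ∫ u in Iic t, R (t - u) (g (u + τ)) := by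
      rw [hG (t+τ)]
      have h4 := (measurePreserving_add_right volume τ).setIntegral_preimage_emb
        (MeasurableEquiv.addRight τ).measurableEmbedding
        (fun s => R (t + τ - s) (g s)) (Iic (t+τ))
      rw [hpre] at h4
      rw [← h4]
      exact setIntegral_congr_fun measurableSet_Iic fun u _ => by
        rw [add_sub_add_right_eq_sub]
    have hsub : G (t+τ) - G t = ∫ s in Iic t, R (t - s) (g (s+τ) - g s) := by
      rw [hGshift, hG t, ← integral_sub hshiftInt (hIntb t)]
      refine integral_congr_ae (Eventually.of_forall fun s => ?_)
      exact (map_sub (R (t - s)) (g (s + τ)) (g s)).symm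
    rw [hsub]
    calc (‖∫ s in Iic t, R (t-s) (g (s+τ) - g s)‖₊ : ℝ≥0∞)
        ≤ ∫⁻ s in Iic t, (‖R (t-s) (g (s+τ) - g s)‖₊ : ℝ≥0∞) :=
          enorm_integral_le_lintegral_enorm _
      _ ≤ ∫⁻ s in Iic t, Φ (t - s) * H s := by
          refine lintegral_mono_ae ?_
          filter_upwards [hae_lt t, self_mem_ae_restrict measurableSet_Iic,
            ae_restrict_of_ae hgg', ae_restrict_of_ae hshift] with s hne hst h1 h2
          have h2' : g (s+τ) = g' (s+τ) := h2
          have hlt : 0 < t - s := sub_pos.mpr (lt_of_le_of_ne hst hne)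
          calc (‖R (t-s) (g (s+τ) - g s)‖₊ : ℝ≥0∞)
              ≤ Φ (t - s) * (‖g (s+τ) - g s‖₊ : ℝ≥0∞) := hRb _ hlt _
            _ = Φ (t - s) * H s := by rw [hH]; dsimp only; rw [h2', h1]
      _ = ∫⁻ r in Ioi (0:ℝ), Φ r * H (t - r) := hrefl H t
      _ ≤ _ := hHolder H hHm t
  -- the main estimate for a fixed window
  have hmain : ∀ x : ℝ,
      ∫⁻ t in Ioc x (x+l), (‖G (t+τ) - G t‖₊ : ℝ≥0∞) ^ p ≤
        (ENNReal.ofReal M * Kq) ^ p *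
          ((∫⁻ r in Ioi (0:ℝ), W r ^ p) * (ENNReal.ofReal l * D ^ p)) := by
    intro x
    have hWpt : ∀ r : ℝ, W r ^ p ≠ ⊤ :=
      fun r => (ENNReal.rpow_lt_top_of_nonneg hp0.le ENNReal.ofReal_ne_top).ne
    have hJb : ∀ r : ℝ, (∫⁻ t in Ioc x (x+l), H (t - r) ^ p) ≤ ENNReal.ofReal l * D ^ p := by
      intro r
      have hpre2 : ((fun u : ℝ => u + -r)⁻¹' (Ioc (x-r) ((x-r)+l))) = Ioc x (x+l) := by
        ext u
        simp only [mem_preimage, mem_Ioc]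
        constructor <;> intro h <;> exact ⟨by linarith [h.1], by linarith [h.2]⟩
      have hcv : ∫⁻ t in Ioc x (x+l), H (t - r) ^ p
          = ∫⁻ u in Ioc (x-r) ((x-r)+l), H u ^ p := by
        rw [← hpre2]
        have h5 := (measurePreserving_add_right volume (-r)).setLIntegral_comp_preimage_emb
          (MeasurableEquiv.addRight (-r)).measurableEmbedding
          (fun u => H u ^ p) (Ioc (x-r) ((x-r)+l))
        rw [← h5]
        refine setLIntegral_congr_fun (measurableSet_preimage (by fun_prop) measurableSet_Ioc)
          (fun t _ => ?_)
        rw [sub_eq_add_neg]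
      rw [hcv]
      exact hDSb (x-r)
    calc ∫⁻ t in Ioc x (x+l), (‖G (t+τ) - G t‖₊ : ℝ≥0∞) ^ p
        ≤ ∫⁻ t in Ioc x (x+l),
            (ENNReal.ofReal M * Kq) ^ p *
              (∫⁻ r in Ioi (0:ℝ), W r ^ p * H (t - r) ^ p) := by
          refine lintegral_mono fun t => ?_
          have h6 := hdiff t
          have h7 : (‖G (t+τ) - G t‖₊ : ℝ≥0∞) ^ p ≤
              (ENNReal.ofReal M * (Kq *
                (∫⁻ r in Ioi (0:ℝ), (W r * H (t - r)) ^ p) ^ (1/p))) ^ p :=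
            ENNReal.rpow_le_rpow h6 hp0.le
          refine le_trans h7 (le_of_eq ?_)
          rw [← mul_assoc, ENNReal.mul_rpow_of_nonneg _ _ hp0.le,
            ← ENNReal.rpow_mul, one_div_mul_cancel hp0.ne', ENNReal.rpow_one]
          congr 1
          refine lintegral_congr fun r => ?_
          rw [ENNReal.mul_rpow_of_nonneg _ _ hp0.le]
      _ = (ENNReal.ofReal M * Kq) ^ p *
            ∫⁻ t in Ioc x (x+l), (∫⁻ r in Ioi (0:ℝ), W r ^ p * H (t - r) ^ p) := by
          rw [lintegral_const_mul' _ _ ?_]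
          exact (ENNReal.rpow_lt_top_of_nonneg hp0.le
            (ENNReal.mul_lt_top ENNReal.ofReal_lt_top hKqt.lt_top).ne).ne
      _ ≤ (ENNReal.ofReal M * Kq) ^ p *
            ((∫⁻ r in Ioi (0:ℝ), W r ^ p) * (ENNReal.ofReal l * D ^ p)) := by
          refine mul_le_mul_right ?_ _
          have hswap : ∫⁻ t in Ioc x (x+l), (∫⁻ r in Ioi (0:ℝ), W r ^ p * H (t - r) ^ p)
              = ∫⁻ r in Ioi (0:ℝ), (∫⁻ t in Ioc x (x+l), W r ^ p * H (t - r) ^ p) := by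
            refine lintegral_lintegral_swap ?_
            apply Measurable.aemeasurable
            fun_prop
          rw [hswap]
          calc ∫⁻ r in Ioi (0:ℝ), (∫⁻ t in Ioc x (x+l), W r ^ p * H (t - r) ^ p)
              = ∫⁻ r in Ioi (0:ℝ), W r ^ p * (∫⁻ t in Ioc x (x+l), H (t - r) ^ p) := by
                refine lintegral_congr fun r => ?_
                exact lintegral_const_mul' _ _ (hWpt r)
            _ ≤ ∫⁻ r in Ioi (0:ℝ), W r ^ p * (ENNReal.ofReal l * D ^ p) :=
                lintegral_mono fun r => mul_le_mul_right (hJb r) _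
            _ = (∫⁻ r in Ioi (0:ℝ), W r ^ p) * (ENNReal.ofReal l * D ^ p) :=
                lintegral_mul_const _ (by fun_prop)
  -- conclusion
  rw [DS, iSup_univ]
  refine iSup_le fun x => ?_
  by_cases hGi : IntegrableOn (fun t => ‖G (t+τ) - G t‖ ^ p) (Ioc x (x+l)) volume
  · have hval : ∫ t in x..(x+l), ‖G (t+τ) - G t‖^p = ∫ t in Ioc x (x+l), ‖G (t+τ) - G t‖^p :=
      intervalIntegral.integral_of_le (by linarith)
    have hint0 : 0 ≤ ∫ t in Ioc x (x+l), ‖G (t+τ) - G t‖^p :=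
      setIntegral_nonneg measurableSet_Ioc fun t _ => Real.rpow_nonneg (norm_nonneg _) p
    have hE : ENNReal.ofReal (∫ t in Ioc x (x+l), ‖G (t+τ) - G t‖^p)
        = ∫⁻ t in Ioc x (x+l), (‖G (t+τ) - G t‖₊ : ℝ≥0∞) ^ p := by
      rw [ofReal_integral_eq_lintegral_ofReal hGi
        (ae_restrict_of_ae (Eventually.of_forall fun t =>
          Real.rpow_nonneg (norm_nonneg _) p))]
      refine lintegral_congr fun t => ?_
      rw [← enorm_eq_nnnorm, ← ofReal_norm,
        ENNReal.ofReal_rpow_of_nonneg (norm_nonneg _) hp0.le]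
    have hterm : ENNReal.ofReal (((1/l) * ∫ t in x..x+l, ‖G (t+τ) - G t‖^p) ^ (1/p))
        ≤ (ENNReal.ofReal (1/l) *
            ((ENNReal.ofReal M * Kq) ^ p *
              ((∫⁻ r in Ioi (0:ℝ), W r ^ p) * (ENNReal.ofReal l * D ^ p)))) ^ (1/p) := by
      have hint0' : 0 ≤ ∫ t in x..x+l, ‖G (t+τ) - G t‖^p := by
        rw [hval]; exact hint0
      rw [← ENNReal.ofReal_rpow_of_nonneg (mul_nonneg (by positivity) hint0') (le_of_lt hp1),
        ENNReal.ofReal_mul (by positivity), hval, hE]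
      exact ENNReal.rpow_le_rpow (mul_le_mul_right (hmain x) _) (le_of_lt hp1)
    refine le_trans hterm ?_
    -- now pure ENNReal algebra
    have hll : ENNReal.ofReal (1/l) * ENNReal.ofReal l = 1 := by
      rw [← ENNReal.ofReal_mul (by positivity), one_div_mul_cancel hl.ne', ENNReal.ofReal_one]
    have halg : ENNReal.ofReal (1/l) *
        ((ENNReal.ofReal M * Kq) ^ p *
          ((∫⁻ r in Ioi (0:ℝ), W r ^ p) * (ENNReal.ofReal l * D ^ p)))
        = (ENNReal.ofReal M * Kq) ^ p * (∫⁻ r in Ioi (0:ℝ), W r ^ p) *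
            (ENNReal.ofReal (1/l) * ENNReal.ofReal l) * D ^ p := by
      ring
    rw [halg, hll, mul_one]
    rw [ENNReal.mul_rpow_of_nonneg _ _ (le_of_lt hp1),
      ENNReal.mul_rpow_of_nonneg _ _ (le_of_lt hp1),
      ← ENNReal.rpow_mul, ← ENNReal.rpow_mul,
      mul_one_div_cancel hp0.ne', ENNReal.rpow_one, ENNReal.rpow_one]
    have hfinal : ENNReal.ofReal M * Kq * (∫⁻ r in Ioi (0:ℝ), W r ^ p) ^ (1/p)
        = ENNReal.ofReal
            (M * (∫ s in Ioi (0:ℝ), (s ^ (β - 1) * (1 + s ^ ζ) / (1 + s ^ γ)) ^ q) ^ (1 / q) *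
              (∫ s in Ioi (0:ℝ), (1 / (1 + s ^ ζ)) ^ p) ^ (1 / p)) := by
      have hIK : 0 ≤ ∫ s in Ioi (0:ℝ), k s ^ q :=
        setIntegral_nonneg measurableSet_Ioi fun s hs => Real.rpow_nonneg (hk0 s hs) q
      have hIW : 0 ≤ ∫ s in Ioi (0:ℝ), w s ^ p :=
        setIntegral_nonneg measurableSet_Ioi fun s hs => Real.rpow_nonneg (hw0 s hs) p
      rw [hKq, hKq_eq, hWp_eq,
        ENNReal.ofReal_rpow_of_nonneg hIK (one_div_nonneg.mpr hq0.le),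
        ENNReal.ofReal_rpow_of_nonneg hIW (le_of_lt hp1),
        ← ENNReal.ofReal_mul hM.le,
        ← ENNReal.ofReal_mul (mul_nonneg hM.le (Real.rpow_nonneg hIK _))]
    rw [hfinal]
  · have hni : ¬ IntervalIntegrable (fun t => ‖G (t+τ) - G t‖ ^ p) volume x (x+l) := by
      rw [intervalIntegrable_iff_integrableOn_Ioc_of_le (by linarith)]
      exact hGi
    rw [intervalIntegral.integral_undef hni, mul_zero,
      Real.zero_rpow (one_div_ne_zero hp0.ne'), ENNReal.ofReal_zero]
    exact zero_le
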